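/- Every finite uniquely atomistic lattice is geometric, i.e., it is both semimodular and atomistic. -/
import Mathlib


/-- Every finite uniquely atomistic lattice is geometric, i.e.
both semimodular (if `x ⊓ y` is covered by both `x` and `y`, then `x ⊔ y` covers
both `x` and `y`) and atomistic (every element is a join of atoms). -/
theorem geometric_of_uniquelyAtomistic
    {α : Type*} [Lattice α] [OrderBot α] [Fintype α]
    (hua : ∀ x : α, ∃! S : Finset α, (∀ a ∈ S, IsAtom a) ∧ x = S.sup id) :
    (∀ x y : α, x ⊓ y ⋖ x → x ⊓ y ⋖ y → (x ⋖ x ⊔ y ∧ y ⋖ x ⊔ y)) ∧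
    (∀ x : α, ∃ S : Finset α, (∀ a ∈ S, IsAtom a) ∧ x = S.sup id) := by
  classical
  -- `A x` : the set of all atoms below `x`
  set A : α → Finset α := fun x => Finset.univ.filter (fun a => IsAtom a ∧ a ≤ x) with hA
  have memA : ∀ {a x : α}, a ∈ A x ↔ IsAtom a ∧ a ≤ x := by
    intro a x; simp [hA]
  have hsup : ∀ x : α, x = (A x).sup id := by
    intro x
    obtain ⟨S, ⟨hS1, hS2⟩, _⟩ := hua x
    apply le_antisymm
    · have hsub : S ⊆ A x := fun a ha =>
        memA.mpr ⟨hS1 a ha, le_trans (Finset.le_sup (f := id) ha) hS2.ge⟩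
      calc x = S.sup id := hS2
        _ ≤ (A x).sup id := Finset.sup_mono hsub
    · exact Finset.sup_le fun a ha => (memA.mp ha).2
  have hle : ∀ x y : α, A x ⊆ A y → x ≤ y := by
    intro x y h
    calc x = (A x).sup id := hsup x
      _ ≤ (A y).sup id := Finset.sup_mono h
      _ = y := (hsup y).symm
  have hAunion : ∀ x y : α, A (x ⊔ y) = A x ∪ A y := by
    intro x y
    obtain ⟨S, _, huniq⟩ := hua (x ⊔ y)
    have h1 : A (x ⊔ y) = S :=
      huniq _ ⟨fun a ha => (memA.mp ha).1, hsup _⟩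
    have h2 : A x ∪ A y = S := by
      refine huniq _ ⟨fun a ha => ?_, ?_⟩
      · rcases Finset.mem_union.mp ha with h | h
        · exact (memA.mp h).1
        · exact (memA.mp h).1
      · rw [Finset.sup_union, ← hsup x, ← hsup y]
    rw [h1, h2]
  -- key cover-transfer lemma
  have key : ∀ x y : α, x ⊓ y ⋖ y → x ⋖ x ⊔ y := by
    intro x y hcov
    have hxlt : x < x ⊔ y := by
      refine lt_of_le_of_ne le_sup_left fun h => ?_
      have hyx : y ≤ x := le_sup_right.trans h.ge
      exact hcov.lt.ne (le_antisymm inf_le_right (le_inf hyx le_rfl))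
    refine ⟨hxlt, fun z hxz hzlt => ?_⟩
    have hz1 : x ⊓ y ≤ z ⊓ y := le_inf (inf_le_left.trans hxz.le) inf_le_right
    rcases hcov.eq_or_eq hz1 inf_le_right with h | h
    · -- z ⊓ y = x ⊓ y : show z ≤ x, contradiction with x < z
      have hzx : z ≤ x := by
        refine hle z x fun a ha => ?_
        obtain ⟨hat, haz⟩ := memA.mp ha
        have : a ∈ A (x ⊔ y) := memA.mpr ⟨hat, haz.trans hzlt.le⟩
        rw [hAunion] at this
        rcases Finset.mem_union.mp this with h' | h'
        · exact h'
        · have hay : a ≤ y := (memA.mp h').2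
          have : a ≤ x ⊓ y := h ▸ le_inf haz hay
          exact memA.mpr ⟨hat, this.trans inf_le_left⟩
      exact absurd (hxz.trans_le hzx) (lt_irrefl x)
    · -- z ⊓ y = y : y ≤ z, so x ⊔ y ≤ z, contradiction
      have hyz : y ≤ z := h ▸ inf_le_left
      exact absurd (hzlt.trans_le (sup_le hxz.le hyz)) (lt_irrefl z)
  refine ⟨fun x y h1 h2 => ⟨key x y h2, ?_⟩, fun x => (hua x).exists⟩
  have := key y x (by rwa [inf_comm])
  rwa [sup_comm] at this
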